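/- Fix h > 0 and F ∈ ℂ with a := Re F > 0. Let u : (0,∞) → ℂ be continuous and square-integrable, and define v(x) = h^{-1}∫₀ˣ u(t)·e^{(t−x)F/h} dt for x > 0. Then: (i) v is continuously differentiable on (0,∞) and satisfies F·v + h·v′ = u (i.e. v is a right inverse image of u under the operator J = F + h∂_x); (ii) ‖v‖_{L²(0,∞)} ≤ a^{-1}·‖u‖_{L²(0,∞)}; and (iii) ‖h·v′‖_{L²(0,∞)} ≤ (1 + |F|/a)·‖u‖_{L²(0,∞)}. In particular v lies in L²(0,∞) with semiclassical H¹ norm ‖v‖_{L²} + ‖h v′‖_{L²} ≤ (1 + a^{-1} + |F|/a)‖u‖_{L²(0,∞)}. -/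

import Mathlib

open MeasureTheory Set

noncomputable def kker (h a s : ℝ) : ENNReal := ENNReal.ofReal (h⁻¹ * Real.exp (-(a/h) * s))

lemma kker_meas (h a : ℝ) : Measurable (kker h a) := by
  apply Measurable.ennreal_ofReal
  fun_prop

lemma kker_ne_zero {h a : ℝ} (hh : 0 < h) (s : ℝ) : kker h a s ≠ 0 := by
  simp [kker, ENNReal.ofReal_eq_zero, not_le]
  positivity

lemma kker_ne_top (h a s : ℝ) : kker h a s ≠ ⊤ := ENNReal.ofReal_ne_top

lemma aux_exp_integral {b : ℝ} (hb : 0 < b) :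
    ∫ x in Set.Ioi (0:ℝ), Real.exp (-(b * x)) = b⁻¹ := by
  have hderiv : ∀ x ∈ Set.Ioi (0:ℝ),
      HasDerivAt (fun y : ℝ => -b⁻¹ * Real.exp (-(b*y))) (Real.exp (-(b*x))) x := by
    intro x _
    have : HasDerivAt (fun y : ℝ => -(b*y)) (-b) x := by
      have := ((hasDerivAt_id x).const_mul b).neg; simp only [Pi.neg_def, id] at this; simpa using this
    have := (this.exp).const_mul (-b⁻¹)
    refine this.congr_deriv ?_
    field_simp [hb.ne']
  have hint : IntegrableOn (fun x => Real.exp (-(b*x))) (Set.Ioi 0) := by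
    simpa [neg_mul] using exp_neg_integrableOn_Ioi 0 hb
  have htend : Filter.Tendsto (fun y : ℝ => -b⁻¹ * Real.exp (-(b*y))) Filter.atTop (nhds 0) := by
    have h1 : Filter.Tendsto (fun y : ℝ => -(b*y)) Filter.atTop Filter.atBot := by
      have := (Filter.tendsto_const_mul_atTop_of_pos hb).mpr Filter.tendsto_id
      simpa using Filter.tendsto_neg_atBot_iff.mpr this
    have h2 := (Real.tendsto_exp_atBot).comp h1
    simpa using h2.const_mul (-b⁻¹)
  have hcont : ContinuousWithinAt (fun y : ℝ => -b⁻¹ * Real.exp (-(b*y))) (Set.Ici 0) 0 :=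
    (Continuous.continuousWithinAt (by fun_prop))
  have := MeasureTheory.integral_Ioi_of_hasDerivAt_of_tendsto hcont hderiv hint htend
  rw [this]; simp

lemma kker_mass_Ioi {h a : ℝ} (hh : 0 < h) (ha : 0 < a) :
    ∫⁻ s in Set.Ioi (0:ℝ), kker h a s = ENNReal.ofReal a⁻¹ := by
  have hba : 0 < a / h := div_pos ha hh
  have hint : IntegrableOn (fun s => h⁻¹ * Real.exp (-(a/h) * s)) (Set.Ioi (0:ℝ)) := by
    simpa [neg_mul, IntegrableOn] using (exp_neg_integrableOn_Ioi 0 hba).const_mul h⁻¹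
  simp only [kker]
  rw [← MeasureTheory.ofReal_integral_eq_lintegral_ofReal hint]
  · rw [MeasureTheory.integral_const_mul]
    simp only [neg_mul]
    rw [aux_exp_integral hba]
    congr 1
    field_simp
  · exact Filter.Eventually.of_forall fun s => by positivity

lemma kker_mass_Ici {h a : ℝ} (hh : 0 < h) (ha : 0 < a) :
    ∫⁻ s in Set.Ici (0:ℝ), kker h a s = ENNReal.ofReal a⁻¹ := by
  rw [← MeasureTheory.restrict_Ioi_eq_restrict_Ici, kker_mass_Ioi hh ha]

lemma kker_mass_left {h a : ℝ} (hh : 0 < h) (ha : 0 < a) (x : ℝ) :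
    ∫⁻ t in Set.Ioc 0 x, kker h a (x - t) ≤ ENNReal.ofReal a⁻¹ := by
  have hpre : Set.Ioc 0 x = (fun t => x - t) ⁻¹' (Set.Ico 0 x) := by
    ext t
    simp only [Set.mem_Ioc, Set.mem_preimage, Set.mem_Ico, sub_nonneg, sub_lt_self_iff]
    tauto
  have hmp : MeasurePreserving (fun t : ℝ => x - t) volume volume := by
    have h1 := Measure.measurePreserving_neg (volume : Measure ℝ)
    have h2 := measurePreserving_add_left (volume : Measure ℝ) x
    simpa [Function.comp_def, sub_eq_add_neg] using h2.comp h1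
  have e := hmp.setLIntegral_comp_preimage (s := Set.Ico 0 x)
      measurableSet_Ico (kker_meas h a)
  rw [hpre, e]
  calc ∫⁻ s in Set.Ico 0 x, kker h a s ≤ ∫⁻ s in Set.Ici 0, kker h a s :=
        lintegral_mono_set Set.Ico_subset_Ici_self
    _ = ENNReal.ofReal a⁻¹ := kker_mass_Ici hh ha

lemma kker_mass_right {h a : ℝ} (hh : 0 < h) (ha : 0 < a) (t : ℝ) :
    ∫⁻ x in Set.Ici t, kker h a (x - t) = ENNReal.ofReal a⁻¹ := by
  have hpre : Set.Ici t = (fun x => x - t) ⁻¹' (Set.Ici 0) := by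
    ext x; simp [sub_nonneg]
  have e := (measurePreserving_sub_right volume t).setLIntegral_comp_preimage
      (s := Set.Ici 0) measurableSet_Ici (kker_meas h a)
  rw [hpre, e, kker_mass_Ici hh ha]



lemma eLpNorm_two_eq {α : Type*} [MeasurableSpace α] (f : α → ℂ) (μ : MeasureTheory.Measure α) :
    MeasureTheory.eLpNorm f 2 μ = (∫⁻ x, ((‖f x‖₊ : ENNReal))^2 ∂μ) ^ ((1:ℝ)/2) := by
  rw [MeasureTheory.eLpNorm_eq_lintegral_rpow_enorm two_ne_zero ENNReal.ofNat_ne_top]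
  have h2 : ((2:ENNReal)).toReal = (2:ℝ) := by norm_num
  rw [h2]
  congr 1
  apply lintegral_congr
  intro x
  rw [← ENNReal.rpow_natCast]
  norm_num
  rfl

/-- **Right inverse of `J = F + h ∂ₓ` on the half line, fixed frequency.**
Fix `h > 0` and `F ∈ ℂ` with `a := Re F > 0`. Let `u : (0,∞) → ℂ` be continuous and
square integrable, and `v x = h⁻¹ ∫₀ˣ u t · e^{(t-x)F/h} dt`. Then `v` is `C¹` on `(0,∞)`,
satisfies `F·v + h·v' = u`, and `‖v‖_{L²} ≤ a⁻¹‖u‖_{L²}`,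
`‖h v'‖_{L²} ≤ (1 + |F|/a)‖u‖_{L²}`; in particular
`‖v‖_{L²} + ‖h v'‖_{L²} ≤ (1 + a⁻¹ + |F|/a)‖u‖_{L²}`. -/
theorem stmt9 (h : ℝ) (hh : 0 < h) (F : ℂ) (ha : 0 < F.re)
    (u : ℝ → ℂ) (hu_cont : ContinuousOn u (Set.Ioi 0))
    (hu_L2 : MeasureTheory.MemLp u 2 (volume.restrict (Set.Ioi 0)))
    (v : ℝ → ℂ)
    (hv : ∀ x : ℝ, v x =
      (h : ℂ)⁻¹ * ∫ t in (0:ℝ)..x, u t * Complex.exp (((t - x : ℝ) : ℂ) * F / (h : ℂ))) :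
    ∃ v' : ℝ → ℂ,
      ContinuousOn v' (Set.Ioi 0) ∧
      (∀ x ∈ Set.Ioi (0:ℝ), HasDerivAt v (v' x) x) ∧
      (∀ x ∈ Set.Ioi (0:ℝ), F * v x + (h : ℂ) * v' x = u x) ∧
      MeasureTheory.MemLp v 2 (volume.restrict (Set.Ioi 0)) ∧
      eLpNorm v 2 (volume.restrict (Set.Ioi 0)) ≤
        ENNReal.ofReal (F.re)⁻¹ * eLpNorm u 2 (volume.restrict (Set.Ioi 0)) ∧
      eLpNorm (fun x => (h : ℂ) * v' x) 2 (volume.restrict (Set.Ioi 0)) ≤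
        ENNReal.ofReal (1 + ‖F‖ / F.re) * eLpNorm u 2 (volume.restrict (Set.Ioi 0)) ∧
      eLpNorm v 2 (volume.restrict (Set.Ioi 0)) +
          eLpNorm (fun x => (h : ℂ) * v' x) 2 (volume.restrict (Set.Ioi 0)) ≤
        ENNReal.ofReal (1 + (F.re)⁻¹ + ‖F‖ / F.re) *
          eLpNorm u 2 (volume.restrict (Set.Ioi 0)) := by
  have hh0 : (h:ℂ) ≠ 0 := by exact_mod_cast hh.ne'
  -- integrability of u on finite pieces
  have huInt : ∀ x : ℝ, MeasureTheory.IntegrableOn u (Set.Ioc 0 x) := by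
    intro x
    have h1 : MemLp u 2 ((volume.restrict (Set.Ioi 0)).restrict (Set.Ioc 0 x)) :=
      hu_L2.restrict _
    rw [Measure.restrict_restrict measurableSet_Ioc,
        Set.inter_eq_left.mpr Set.Ioc_subset_Ioi_self] at h1
    haveI : IsFiniteMeasure (volume.restrict (Set.Ioc (0:ℝ) x)) :=
      ⟨by rw [Measure.restrict_apply_univ]; exact measure_Ioc_lt_top⟩
    exact h1.integrable one_le_two
  set c : ℂ := -(F / h) with hc
  set f : ℝ → ℂ := fun t => u t * Complex.exp (t * F / h) with hfdef
  have hf_cont : ContinuousOn f (Set.Ioi 0) := by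
    apply hu_cont.mul
    fun_prop
  have hfInt : ∀ x : ℝ, 0 < x → IntervalIntegrable f volume 0 x := by
    intro x hx
    have h1 : IntervalIntegrable u volume 0 x :=
      (intervalIntegrable_iff_integrableOn_Ioc_of_le hx.le).mpr (huInt x)
    exact h1.mul_continuousOn (by fun_prop)
  set w : ℝ → ℂ := fun x => ∫ t in (0:ℝ)..x, f t with hwdef
  have hw_deriv : ∀ x ∈ Set.Ioi (0:ℝ), HasDerivAt w (f x) x := by
    intro x hx
    have hmem : Set.Ioi (0:ℝ) ∈ nhds x := isOpen_Ioi.mem_nhds hx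
    exact intervalIntegral.integral_hasDerivAt_right (hfInt x hx)
      (hf_cont.stronglyMeasurableAtFilter isOpen_Ioi x hx)
      (hf_cont.continuousAt hmem)
  have hveq : ∀ x : ℝ, v x = (h:ℂ)⁻¹ * (Complex.exp (c * x) * w x) := by
    intro x
    rw [hv x]
    congr 1
    rw [← intervalIntegral.integral_const_mul]
    apply intervalIntegral.integral_congr
    intro t _
    show u t * Complex.exp (((t - x : ℝ) : ℂ) * F / h) = Complex.exp (c * x) * f t
    have he : ((t - x : ℝ) : ℂ) * F / h = c * x + (t : ℂ) * F / h := by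
      rw [hc]; push_cast; ring
    rw [he, Complex.exp_add, hfdef]
    ring
  set v' : ℝ → ℂ := fun x => (h:ℂ)⁻¹ * (u x - F * v x) with hv'def
  have hode : ∀ x ∈ Set.Ioi (0:ℝ), F * v x + (h:ℂ) * v' x = u x := by
    intro x _
    rw [hv'def]
    field_simp
    ring
  have hv_deriv : ∀ x ∈ Set.Ioi (0:ℝ), HasDerivAt v (v' x) x := by
    intro x hx
    have hexp : HasDerivAt (fun y : ℝ => Complex.exp (c * y)) (c * Complex.exp (c * x)) x := by
      have h1 : HasDerivAt (fun z : ℂ => Complex.exp (c * z)) (c * Complex.exp (c * x)) (x : ℂ) := by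
        simpa [mul_comm] using ((hasDerivAt_id (x:ℂ)).const_mul c).cexp
      exact h1.comp_ofReal
    have hprod := ((hexp.mul (hw_deriv x hx)).const_mul ((h:ℂ)⁻¹))
    have heq : HasDerivAt v ((h:ℂ)⁻¹ * (c * Complex.exp (c * x) * w x + Complex.exp (c * x) * f x)) x := by
      refine HasDerivAt.congr_of_eventuallyEq hprod ?_
      exact Filter.Eventually.of_forall fun y => (hveq y)
    convert heq using 1
    have hkey : Complex.exp (c * x) * f x = u x := by
      rw [hfdef]
      have : Complex.exp (c * x) * Complex.exp ((x:ℂ) * F / h) = 1 := by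
        rw [← Complex.exp_add, hc]
        have : -(F / ↑h) * ↑x + ↑x * F / ↑h = 0 := by ring
        rw [this, Complex.exp_zero]
      calc Complex.exp (c * ↑x) * (u x * Complex.exp (↑x * F / ↑h))
          = u x * (Complex.exp (c * ↑x) * Complex.exp ((x:ℂ) * F / h)) := by ring
        _ = u x := by rw [this]; ring
    have hwv : Complex.exp (c * x) * w x = h * v x := by
      rw [hveq x]; field_simp
    show (h:ℂ)⁻¹ * (u x - F * v x) = _
    rw [mul_assoc c, hwv, hkey, hc]
    field_simp
    ring
  have hv_cont : ContinuousOn v (Set.Ioi 0) := fun x hx =>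
    (hv_deriv x hx).continuousAt.continuousWithinAt
  have hv'_cont : ContinuousOn v' (Set.Ioi 0) := by
    rw [hv'def]
    exact continuousOn_const.mul (hu_cont.sub (continuousOn_const.mul hv_cont))
  -- L² estimates
  set μ := volume.restrict (Set.Ioi (0:ℝ)) with hμdef
  set a := F.re with hadef
  have hbound1 : ∀ x ∈ Set.Ioi (0:ℝ),
      (‖v x‖₊ : ENNReal) ≤ ∫⁻ t in Set.Ioc 0 x, (‖u t‖₊ : ENNReal) * kker h a (x - t) := by
    intro x hx
    have hx0 : (0:ℝ) ≤ x := le_of_lt hx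
    have hnormInt : IntervalIntegrable (fun t => ‖u t‖) volume 0 x :=
      ((intervalIntegrable_iff_integrableOn_Ioc_of_le hx0).mpr (huInt x)).norm
    have hkInt : IntervalIntegrable (fun t => ‖u t‖ * (h⁻¹ * Real.exp (-(a/h) * (x - t))))
        volume 0 x := hnormInt.mul_continuousOn (by fun_prop)
    have hreal : ‖v x‖ ≤ ∫ t in Set.Ioc 0 x, ‖u t‖ * (h⁻¹ * Real.exp (-(a/h) * (x - t))) := by
      rw [hv x, norm_mul]
      have h1 : ‖((h:ℂ))⁻¹‖ = h⁻¹ := by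
        rw [norm_inv, Complex.norm_real, Real.norm_of_nonneg hh.le]
      rw [h1]
      have h2 : ‖∫ t in (0:ℝ)..x, u t * Complex.exp (((t - x : ℝ) : ℂ) * F / (h : ℂ))‖
          ≤ ∫ t in (0:ℝ)..x, ‖u t * Complex.exp (((t - x : ℝ) : ℂ) * F / (h : ℂ))‖ :=
        intervalIntegral.norm_integral_le_integral_norm hx0
      have h3 : ∀ t : ℝ, ‖u t * Complex.exp (((t - x : ℝ) : ℂ) * F / (h : ℂ))‖
          = ‖u t‖ * Real.exp (-(a/h) * (x - t)) := by
        intro t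
        rw [norm_mul]
        congr 1
        rw [Complex.norm_exp]
        have he2 : ((t - x : ℝ) : ℂ) * F / (h : ℂ) = (((t - x)/h : ℝ) : ℂ) * F := by
          push_cast; ring
        rw [he2, Complex.re_ofReal_mul, ← hadef]
        congr 1
        ring
      calc h⁻¹ * ‖∫ t in (0:ℝ)..x, u t * Complex.exp (((t - x : ℝ) : ℂ) * F / (h : ℂ))‖
          ≤ h⁻¹ * ∫ t in (0:ℝ)..x, ‖u t‖ * Real.exp (-(a/h) * (x - t)) := by
            refine mul_le_mul_of_nonneg_left ?_ (by positivity)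
            refine h2.trans_eq (intervalIntegral.integral_congr fun t _ => h3 t)
        _ = ∫ t in (0:ℝ)..x, h⁻¹ * (‖u t‖ * Real.exp (-(a/h) * (x - t))) := by
            rw [← intervalIntegral.integral_const_mul]
        _ = ∫ t in Set.Ioc 0 x, ‖u t‖ * (h⁻¹ * Real.exp (-(a/h) * (x - t))) := by
            rw [intervalIntegral.integral_of_le hx0]
            apply setIntegral_congr_fun measurableSet_Ioc
            intro t _
            ring
    have hInt2 : IntegrableOn (fun t => ‖u t‖ * (h⁻¹ * Real.exp (-(a/h) * (x - t))))
        (Set.Ioc 0 x) := (intervalIntegrable_iff_integrableOn_Ioc_of_le hx0).mp hkInt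
    calc (‖v x‖₊ : ENNReal) = ENNReal.ofReal ‖v x‖ := (ofReal_norm _).symm
      _ ≤ ENNReal.ofReal (∫ t in Set.Ioc 0 x, ‖u t‖ * (h⁻¹ * Real.exp (-(a/h) * (x - t)))) :=
          ENNReal.ofReal_le_ofReal hreal
      _ = ∫⁻ t in Set.Ioc 0 x, ENNReal.ofReal (‖u t‖ * (h⁻¹ * Real.exp (-(a/h) * (x - t)))) :=
          MeasureTheory.ofReal_integral_eq_lintegral_ofReal hInt2
            (Filter.Eventually.of_forall fun t => by positivity)
      _ = ∫⁻ t in Set.Ioc 0 x, (‖u t‖₊ : ENNReal) * kker h a (x - t) := by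
          apply lintegral_congr
          intro t
          rw [ENNReal.ofReal_mul (norm_nonneg _), ofReal_norm, kker]
          rfl
  -- measurable representative of u
  have hmk := hu_L2.1
  set u₀ : ℝ → ℂ := hmk.mk u with hu₀def
  have hu₀sm : StronglyMeasurable u₀ := hmk.stronglyMeasurable_mk
  have haeq : u =ᵐ[μ] u₀ := hmk.ae_eq_mk
  have haeq' : ∀ᵐ t ∂(volume : Measure ℝ), t ∈ Set.Ioi (0:ℝ) → u t = u₀ t :=
    (ae_restrict_iff' measurableSet_Ioi).1 haeq
  have hcong1 : ∀ x : ℝ, ∫⁻ t in Set.Ioc 0 x, (‖u t‖₊ : ENNReal) * kker h a (x - t)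
      = ∫⁻ t in Set.Ioc 0 x, (‖u₀ t‖₊ : ENNReal) * kker h a (x - t) := by
    intro x
    apply lintegral_congr_ae
    filter_upwards [ae_restrict_of_ae haeq', ae_restrict_mem measurableSet_Ioc] with t h1 h2
    rw [h1 (Set.Ioc_subset_Ioi_self h2)]
  have hUm : Measurable (fun t => (‖u₀ t‖₊ : ENNReal)^2) :=
    (hu₀sm.measurable.nnnorm.coe_nnreal_ennreal).pow_const 2
  have hbound2 : ∀ x ∈ Set.Ioi (0:ℝ), (‖v x‖₊ : ENNReal)^2 ≤
      ENNReal.ofReal a⁻¹ * ∫⁻ t in Set.Ioc 0 x, (‖u₀ t‖₊ : ENNReal)^2 * kker h a (x - t) := by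
    intro x hx
    set K : ℝ → ENNReal := fun t => kker h a (x - t) with hKdef
    have hKm : Measurable K := (kker_meas h a).comp (measurable_const.sub measurable_id)
    set fcs : ℝ → ENNReal := fun t => (‖u₀ t‖₊ : ENNReal) * K t ^ ((1:ℝ)/2) with hfcs
    set gcs : ℝ → ENNReal := fun t => K t ^ ((1:ℝ)/2) with hgcs
    have hfm : AEMeasurable fcs (volume.restrict (Set.Ioc 0 x)) :=
      ((hu₀sm.measurable.nnnorm.coe_nnreal_ennreal).mul (hKm.pow_const _)).aemeasurable
    have hgm : AEMeasurable gcs (volume.restrict (Set.Ioc 0 x)) :=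
      (hKm.pow_const _).aemeasurable
    have hconj : Real.HolderConjugate 2 2 := Real.HolderConjugate.two_two
    have hCS := ENNReal.lintegral_mul_le_Lp_mul_Lq (volume.restrict (Set.Ioc 0 x)) hconj hfm hgm
    have hfg : ∀ t, (fcs * gcs) t = (‖u₀ t‖₊ : ENNReal) * K t := by
      intro t
      show fcs t * gcs t = _
      rw [hfcs, hgcs]
      simp only
      rw [mul_assoc, ← ENNReal.rpow_add _ _ (kker_ne_zero hh _) (kker_ne_top h a _)]
      norm_num
      rfl
    have hf2 : ∀ t, fcs t ^ (2:ℝ) = (‖u₀ t‖₊ : ENNReal)^2 * K t := by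
      intro t
      rw [hfcs]
      simp only
      rw [ENNReal.mul_rpow_of_nonneg _ _ (by norm_num : (0:ℝ) ≤ 2),
        ← ENNReal.rpow_mul, ENNReal.rpow_two]
      norm_num
    have hg2 : ∀ t, gcs t ^ (2:ℝ) = K t := by
      intro t
      rw [hgcs]
      simp only
      rw [← ENNReal.rpow_mul]
      norm_num
    set A := ∫⁻ t in Set.Ioc 0 x, (‖u₀ t‖₊ : ENNReal)^2 * K t with hA
    have hB : ∫⁻ t in Set.Ioc 0 x, K t ≤ ENNReal.ofReal a⁻¹ := kker_mass_left hh ha x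
    have step1 : (‖v x‖₊ : ENNReal) ≤ A ^ ((1:ℝ)/2) * (ENNReal.ofReal a⁻¹) ^ ((1:ℝ)/2) := by
      calc (‖v x‖₊ : ENNReal) ≤ ∫⁻ t in Set.Ioc 0 x, (‖u₀ t‖₊ : ENNReal) * K t := by
            rw [← hcong1 x]; exact hbound1 x hx
        _ = ∫⁻ t in Set.Ioc 0 x, (fcs * gcs) t := lintegral_congr fun t => (hfg t).symm
        _ ≤ (∫⁻ t in Set.Ioc 0 x, fcs t ^ (2:ℝ)) ^ ((1:ℝ)/2)
            * (∫⁻ t in Set.Ioc 0 x, gcs t ^ (2:ℝ)) ^ ((1:ℝ)/2) := hCS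
        _ = A ^ ((1:ℝ)/2) * (∫⁻ t in Set.Ioc 0 x, K t) ^ ((1:ℝ)/2) := by
            rw [lintegral_congr hf2, lintegral_congr hg2]
        _ ≤ A ^ ((1:ℝ)/2) * (ENNReal.ofReal a⁻¹) ^ ((1:ℝ)/2) := by
            exact mul_le_mul_right (ENNReal.rpow_le_rpow hB (by norm_num)) _
    calc (‖v x‖₊ : ENNReal)^2 ≤ (A ^ ((1:ℝ)/2) * (ENNReal.ofReal a⁻¹) ^ ((1:ℝ)/2))^2 :=
          pow_le_pow_left₀ zero_le step1 2
      _ = A * ENNReal.ofReal a⁻¹ := by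
          rw [mul_pow, ← ENNReal.rpow_natCast (A ^ ((1:ℝ)/2)) 2,
            ← ENNReal.rpow_natCast ((ENNReal.ofReal a⁻¹) ^ ((1:ℝ)/2)) 2,
            ← ENNReal.rpow_mul, ← ENNReal.rpow_mul]
          norm_num
      _ = ENNReal.ofReal a⁻¹ * A := mul_comm _ _
  -- Tonelli
  set G : ℝ × ℝ → ENNReal := fun p =>
    {q : ℝ × ℝ | 0 < q.2 ∧ q.2 ≤ q.1}.indicator
      (fun q => (‖u₀ q.2‖₊ : ENNReal)^2 * kker h a (q.1 - q.2)) p with hGdef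
  have hGm : Measurable G := by
    apply Measurable.indicator
    · exact (hUm.comp measurable_snd).mul
        ((kker_meas h a).comp (measurable_fst.sub measurable_snd))
    · exact (measurableSet_lt measurable_const measurable_snd).inter
        (measurableSet_le measurable_snd measurable_fst)
  have hGx : ∀ x : ℝ, ∫⁻ t, G (x, t) ∂μ
      = ∫⁻ t in Set.Ioc 0 x, (‖u₀ t‖₊ : ENNReal)^2 * kker h a (x - t) := by
    intro x
    have hpt : ∀ t : ℝ, G (x, t) = (Set.Ioc 0 x).indicator
        (fun t => (‖u₀ t‖₊ : ENNReal)^2 * kker h a (x - t)) t := by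
      intro t
      rw [hGdef]
      simp only [Set.indicator_apply, Set.mem_setOf_eq, Set.mem_Ioc]
    rw [lintegral_congr hpt, hμdef, lintegral_indicator measurableSet_Ioc,
      Measure.restrict_restrict measurableSet_Ioc,
      Set.inter_eq_left.mpr Set.Ioc_subset_Ioi_self]
  have hGt : ∀ t ∈ Set.Ioi (0:ℝ), ∫⁻ x, G (x, t) ∂μ
      = (‖u₀ t‖₊ : ENNReal)^2 * ENNReal.ofReal a⁻¹ := by
    intro t ht
    have hpt : ∀ x : ℝ, G (x, t) = (Set.Ici t).indicator
        (fun x => (‖u₀ t‖₊ : ENNReal)^2 * kker h a (x - t)) x := by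
      intro x
      rw [hGdef]
      simp only [Set.indicator_apply, Set.mem_setOf_eq, Set.mem_Ici]
      exact if_congr (by simp only [Set.mem_Ioi] at ht; tauto) rfl rfl
    rw [lintegral_congr hpt, hμdef, lintegral_indicator measurableSet_Ici,
      Measure.restrict_restrict measurableSet_Ici,
      Set.inter_eq_left.mpr (Set.Ici_subset_Ioi.mpr ht),
      lintegral_const_mul' _ _ (ENNReal.pow_ne_top ENNReal.coe_ne_top),
      kker_mass_right hh ha t]
  have hswap : ∫⁻ x, (∫⁻ t, G (x, t) ∂μ) ∂μ = ∫⁻ t, (∫⁻ x, G (x, t) ∂μ) ∂μ := by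
    apply MeasureTheory.lintegral_lintegral_swap
    exact hGm.aemeasurable
  have hE : ∫⁻ x, (‖v x‖₊ : ENNReal)^2 ∂μ ≤
      (ENNReal.ofReal a⁻¹)^2 * ∫⁻ t, (‖u t‖₊ : ENNReal)^2 ∂μ := by
    have e1 : ∫⁻ x, (‖v x‖₊ : ENNReal)^2 ∂μ
        ≤ ∫⁻ x, ENNReal.ofReal a⁻¹ * (∫⁻ t, G (x, t) ∂μ) ∂μ := by
      apply lintegral_mono_ae
      filter_upwards [ae_restrict_mem measurableSet_Ioi] with x hx
      rw [hGx x]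
      exact hbound2 x hx
    have e3 : ∫⁻ t, (∫⁻ x, G (x, t) ∂μ) ∂μ
        = ∫⁻ t, (‖u₀ t‖₊ : ENNReal)^2 * ENNReal.ofReal a⁻¹ ∂μ := by
      apply lintegral_congr_ae
      filter_upwards [ae_restrict_mem measurableSet_Ioi] with t ht
      exact hGt t ht
    have e5 : ∫⁻ t, (‖u₀ t‖₊ : ENNReal)^2 ∂μ = ∫⁻ t, (‖u t‖₊ : ENNReal)^2 ∂μ := by
      apply lintegral_congr_ae
      filter_upwards [haeq] with t ht
      rw [ht]
    calc ∫⁻ x, (‖v x‖₊ : ENNReal)^2 ∂μ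
        ≤ ∫⁻ x, ENNReal.ofReal a⁻¹ * (∫⁻ t, G (x, t) ∂μ) ∂μ := e1
      _ = ENNReal.ofReal a⁻¹ * ∫⁻ x, (∫⁻ t, G (x, t) ∂μ) ∂μ :=
          lintegral_const_mul' _ _ ENNReal.ofReal_ne_top
      _ = ENNReal.ofReal a⁻¹ * ∫⁻ t, (‖u₀ t‖₊ : ENNReal)^2 * ENNReal.ofReal a⁻¹ ∂μ := by
          rw [hswap, e3]
      _ = ENNReal.ofReal a⁻¹ * ((∫⁻ t, (‖u₀ t‖₊ : ENNReal)^2 ∂μ) * ENNReal.ofReal a⁻¹) := by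
          rw [lintegral_mul_const' _ _ ENNReal.ofReal_ne_top]
      _ = (ENNReal.ofReal a⁻¹)^2 * ∫⁻ t, (‖u t‖₊ : ENNReal)^2 ∂μ := by
          rw [e5]; ring
  -- L² bound for v
  have hNv : eLpNorm v 2 μ ≤ ENNReal.ofReal a⁻¹ * eLpNorm u 2 μ := by
    rw [eLpNorm_two_eq, eLpNorm_two_eq]
    calc (∫⁻ x, (‖v x‖₊ : ENNReal)^2 ∂μ) ^ ((1:ℝ)/2)
        ≤ ((ENNReal.ofReal a⁻¹)^2 * ∫⁻ t, (‖u t‖₊ : ENNReal)^2 ∂μ) ^ ((1:ℝ)/2) :=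
          ENNReal.rpow_le_rpow hE (by norm_num)
      _ = ENNReal.ofReal a⁻¹ * (∫⁻ t, (‖u t‖₊ : ENNReal)^2 ∂μ) ^ ((1:ℝ)/2) := by
          rw [ENNReal.mul_rpow_of_nonneg _ _ (by norm_num : (0:ℝ) ≤ 1/2),
            ← ENNReal.rpow_natCast (ENNReal.ofReal a⁻¹) 2, ← ENNReal.rpow_mul]
          norm_num
  have hMemv : MemLp v 2 μ := by
    refine ⟨hv_cont.aestronglyMeasurable measurableSet_Ioi, ?_⟩
    exact lt_of_le_of_lt hNv (ENNReal.mul_lt_top ENNReal.ofReal_lt_top hu_L2.2)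
  -- bound for h v'
  have hhv'eq : (fun x => (h:ℂ) * v' x) = fun x => u x - F * v x := by
    funext x
    rw [hv'def]
    simp only
    field_simp
  have hFv : eLpNorm (fun x => F * v x) 2 μ = (‖F‖₊ : ENNReal) * eLpNorm v 2 μ := by
    have := eLpNorm_const_smul F v 2 μ
    exact this
  have hFvm : AEStronglyMeasurable (fun x => F * v x) μ := by
    exact hMemv.1.const_smul F
  have hNv' : eLpNorm (fun x => (h:ℂ) * v' x) 2 μ
      ≤ ENNReal.ofReal (1 + ‖F‖ / a) * eLpNorm u 2 μ := by
    rw [hhv'eq]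
    have hsub : eLpNorm (fun x => u x - F * v x) 2 μ
        ≤ eLpNorm u 2 μ + eLpNorm (fun x => F * v x) 2 μ := by
      have := eLpNorm_sub_le (f := u) (g := fun x => F * v x) hu_L2.1 hFvm one_le_two
      exact this
    have hchain : eLpNorm u 2 μ + eLpNorm (fun x => F * v x) 2 μ
        ≤ ENNReal.ofReal (1 + ‖F‖ / a) * eLpNorm u 2 μ := by
      have h1 : eLpNorm (fun x => F * v x) 2 μ ≤ ENNReal.ofReal (‖F‖ / a) * eLpNorm u 2 μ := by
        rw [hFv]
        calc (‖F‖₊ : ENNReal) * eLpNorm v 2 μ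
            ≤ (‖F‖₊ : ENNReal) * (ENNReal.ofReal a⁻¹ * eLpNorm u 2 μ) :=
              mul_le_mul_right hNv _
          _ = ENNReal.ofReal (‖F‖ / a) * eLpNorm u 2 μ := by
              rw [← mul_assoc, ← enorm_eq_nnnorm, ← ofReal_norm,
                ← ENNReal.ofReal_mul (norm_nonneg F), div_eq_mul_inv]
      have h2 : ENNReal.ofReal (1 + ‖F‖ / a) = 1 + ENNReal.ofReal (‖F‖ / a) := by
        rw [ENNReal.ofReal_add zero_le_one (by positivity), ENNReal.ofReal_one]
      rw [h2, add_mul, one_mul]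
      exact add_le_add_right h1 _
    exact hsub.trans hchain
  refine ⟨v', hv'_cont, hv_deriv, hode, hMemv, hNv, hNv', ?_⟩
  calc eLpNorm v 2 μ + eLpNorm (fun x => (h:ℂ) * v' x) 2 μ
      ≤ ENNReal.ofReal a⁻¹ * eLpNorm u 2 μ + ENNReal.ofReal (1 + ‖F‖ / a) * eLpNorm u 2 μ :=
        add_le_add hNv hNv'
    _ = (ENNReal.ofReal a⁻¹ + ENNReal.ofReal (1 + ‖F‖ / a)) * eLpNorm u 2 μ := by
        rw [add_mul]
    _ = ENNReal.ofReal (1 + a⁻¹ + ‖F‖ / a) * eLpNorm u 2 μ := by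
        rw [← ENNReal.ofReal_add (by positivity) (by positivity)]
        congr 1
        ring
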